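/- Let G be a finite simple graph on n vertices and let c be an integer with 4 ≤ c ≤ n − 4. If the set { e(S) : S ⊆ V(G), |S| = c } of sizes of induced subgraphs of order c has exactly two elements, then G or its complement is either a star K_{1,n−1} (one vertex adjacent to all other n−1 vertices and no other edges) or the disjoint union of a single edge and n − 2 isolated vertices. -/
import Mathlib


open Finset

/-- `e(S)`: the number of edges of the subgraph of `G` induced by the vertex set `S`. -/
def inducedSize {V : Type*} [Fintype V] [DecidableEq V] (G : SimpleGraph V)
    [DecidableRel G.Adj] (S : Finset V) : ℕ :=
  (G.edgeFinset.filter (· ∈ S.sym2)).card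

/-- `G` is a star `K_{1,n-1}`: one center vertex adjacent to all other vertices,
and no other edges. -/
def IsStarGraph {V : Type*} (G : SimpleGraph V) : Prop :=
  ∃ v : V, ∀ a b : V, G.Adj a b ↔ a ≠ b ∧ (a = v ∨ b = v)

/-- `G` is the disjoint union of a single edge and isolated vertices. -/
def IsSingleEdgeGraph {V : Type*} (G : SimpleGraph V) : Prop :=
  ∃ a b : V, a ≠ b ∧ ∀ x y : V, G.Adj x y ↔ (x = a ∧ y = b) ∨ (x = b ∧ y = a)

/-! ### Auxiliary arithmetic lemmas -/

private def Tri (d i j : ℕ) : Prop := i = j ∨ i = j + d ∨ j = i + d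

private lemma arith1_aux {k d p q z : ℕ} (hk : 3 ≤ k) (hd : d = 1) (htot : k + 3 ≤ p + q + z)
    (tri : ∀ i j, i ≤ p → j ≤ q → i + j ≤ k → k ≤ i + j + z → Tri d i j) :
    p ≤ 1 ∨ p + 2 ≤ q := by
  by_cases hp : p ≤ 1
  · exact Or.inl hp
  push_neg at hp
  by_cases hcase : k ≤ min p k + z
  · have t1 := tri (min p k) 0 (Nat.min_le_left _ _) (Nat.zero_le _) (by omega) (by omega)
    unfold Tri at t1; omega
  · push_neg at hcase
    have hpk : p < k := by rcases Nat.le_total k p with h | h <;> omega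
    have t1 := tri p (k - z - p) le_rfl (by omega) (by omega) (by omega)
    unfold Tri at t1; omega

private lemma arith1 {k d p q z : ℕ} (hk : 3 ≤ k) (hd : d = 1) (htot : k + 3 ≤ p + q + z)
    (tri : ∀ i j, i ≤ p → j ≤ q → i + j ≤ k → k ≤ i + j + z → Tri d i j) :
    p ≤ 1 ∧ q ≤ 1 := by
  have h1 := arith1_aux hk hd htot tri
  have h2 := arith1_aux hk hd (by omega : k + 3 ≤ q + p + z)
    (fun i j hi hj hij hz => by
      have := tri j i hj hi (by omega) (by omega)
      unfold Tri at this ⊢; omega)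
  omega

private lemma arith2_aux {k d p q z : ℕ} (hk : 3 ≤ k) (hd : 2 ≤ d) (htot : k + 3 ≤ p + q + z)
    (tri : ∀ i j, i ≤ p → j ≤ q → i + j ≤ k → k ≤ i + j + z → Tri d i j) :
    ¬(1 ≤ p ∧ 1 ≤ z) := by
  rintro ⟨hp, hz⟩
  by_cases hcase : k + 1 ≤ min p k + z
  · have hmin : 1 ≤ min p k := by omega
    have t1 := tri (min p k) 0 (Nat.min_le_left _ _) (Nat.zero_le _) (by omega) (by omega)
    have t2 := tri (min p k - 1) 0 (by omega) (Nat.zero_le _) (by omega) (by omega)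
    unfold Tri at t1 t2; omega
  · push_neg at hcase
    have hpk : p ≤ k - 1 := by rcases Nat.le_total k p with h | h <;> omega
    set j := k - z - p + 1 with hj
    have hjq : j ≤ q := by omega
    have t1 := tri (p - 1) j (by omega) hjq (by omega) (by omega)
    have t2 := tri p j le_rfl hjq (by omega) (by omega)
    unfold Tri at t1 t2; omega

private lemma arith2 {k d p q z : ℕ} (hk : 3 ≤ k) (hd : 2 ≤ d) (htot : k + 3 ≤ p + q + z)
    (tri : ∀ i j, i ≤ p → j ≤ q → i + j ≤ k → k ≤ i + j + z → Tri d i j) :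
    (p = 0 ∧ q = 0) ∨ (q = 0 ∧ z = 0) ∨ (p = 0 ∧ z = 0) := by
  have triswap : ∀ i j, i ≤ q → j ≤ p → i + j ≤ k → k ≤ i + j + z → Tri d i j :=
    fun i j hi hj hij hzz => by
      have := tri j i hj hi (by omega) (by omega)
      unfold Tri at this ⊢; omega
  have hPZ := arith2_aux hk hd htot tri
  have hQZ := arith2_aux hk hd (by omega : k + 3 ≤ q + p + z) triswap
  by_cases hpq : 1 ≤ p ∧ 1 ≤ q
  · exfalso
    have hz0 : z = 0 := by omega
    subst hz0
    by_cases hbig : k ≤ p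
    · have t1 := tri k 0 hbig (Nat.zero_le _) (by omega) (by omega)
      have t2 := tri (k - 1) 1 (by omega) (by omega) (by omega) (by omega)
      unfold Tri at t1 t2; omega
    · by_cases hbigq : k ≤ q
      · have t1 := triswap k 0 hbigq (Nat.zero_le _) (by omega) (by omega)
        have t2 := triswap (k - 1) 1 (by omega) (by omega) (by omega) (by omega)
        unfold Tri at t1 t2; omega
      · push_neg at hbig hbigq
        have hq4 : 4 ≤ q := by omega
        have hp4 : 4 ≤ p := by omega
        have t0 := tri (k - q) q (by omega) le_rfl (by omega) (by omega)
        have t1 := tri (k - q + 1) (q - 1) (by omega) (by omega) (by omega) (by omega)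
        have t2 := tri (k - q + 2) (q - 2) (by omega) (by omega) (by omega) (by omega)
        have t3 := tri (k - q + 3) (q - 3) (by omega) (by omega) (by omega) (by omega)
        unfold Tri at t0 t1 t2 t3; omega
  · omega

/-! ### Graph-theoretic auxiliary lemmas -/

section Aux

variable {V : Type*} [Fintype V] [DecidableEq V] (G : SimpleGraph V) [DecidableRel G.Adj]

def PS (u w : V) : Finset V :=
  univ.filter (fun z => z ≠ u ∧ z ≠ w ∧ G.Adj u z ∧ ¬ G.Adj w z)

def ZS (u w : V) : Finset V :=
  univ.filter (fun z => z ≠ u ∧ z ≠ w ∧ (G.Adj u z ↔ G.Adj w z))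

def Twins (u w : V) : Prop := ∀ z, z ≠ u → z ≠ w → (G.Adj u z ↔ G.Adj w z)

def Dom (u w : V) : Prop := ∀ z, z ≠ u → z ≠ w → (G.Adj u z ∧ ¬ G.Adj w z)

variable {G}

lemma mem_PS {u w z : V} : z ∈ PS G u w ↔ z ≠ u ∧ z ≠ w ∧ G.Adj u z ∧ ¬ G.Adj w z := by
  simp [PS]

lemma mem_ZS {u w z : V} : z ∈ ZS G u w ↔ z ≠ u ∧ z ≠ w ∧ (G.Adj u z ↔ G.Adj w z) := by
  simp [ZS]

lemma PQZ_card {u w : V} (huw : u ≠ w) :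
    (PS G u w).card + (PS G w u).card + (ZS G u w).card + 2 = Fintype.card V := by
  classical
  have hdisj1 : Disjoint (PS G u w) (PS G w u) := by
    rw [Finset.disjoint_left]
    intro z h1 h2
    exact (mem_PS.mp h2).2.2.2 (mem_PS.mp h1).2.2.1
  have hdisj2 : Disjoint (PS G u w ∪ PS G w u) (ZS G u w) := by
    rw [Finset.disjoint_left]
    intro z h1 h2
    rcases Finset.mem_union.mp h1 with h1 | h1
    · exact (mem_PS.mp h1).2.2.2 ((mem_ZS.mp h2).2.2.mp (mem_PS.mp h1).2.2.1)
    · exact (mem_PS.mp h1).2.2.2 ((mem_ZS.mp h2).2.2.mpr (mem_PS.mp h1).2.2.1)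
  have hunion : PS G u w ∪ PS G w u ∪ ZS G u w = univ \ {u, w} := by
    ext z
    simp only [Finset.mem_union, mem_PS, mem_ZS, Finset.mem_sdiff, Finset.mem_univ,
      Finset.mem_insert, Finset.mem_singleton, true_and]
    constructor
    · rintro ((⟨h1, h2, _⟩ | ⟨h1, h2, _⟩) | ⟨h1, h2, _⟩) <;> push_neg <;> try exact ⟨h1, h2⟩
      exact ⟨h2, h1⟩
    · intro hz
      push_neg at hz
      by_cases hu : G.Adj u z <;> by_cases hw : G.Adj w z
      · exact Or.inr ⟨hz.1, hz.2, by tauto⟩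
      · exact Or.inl (Or.inl ⟨hz.1, hz.2, hu, hw⟩)
      · exact Or.inl (Or.inr ⟨hz.2, hz.1, hw, hu⟩)
      · exact Or.inr ⟨hz.1, hz.2, by tauto⟩
  have hcard : (univ \ ({u, w} : Finset V)).card = Fintype.card V - 2 := by
    rw [Finset.card_sdiff_of_subset (Finset.subset_univ _), Finset.card_univ, Finset.card_pair huw]
  have h2n : 2 ≤ Fintype.card V := by
    have : ({u, w} : Finset V).card ≤ Fintype.card V := by
      rw [← Finset.card_univ]; exact Finset.card_le_card (Finset.subset_univ _)
    rw [Finset.card_pair huw] at this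
    exact this
  have := Finset.card_union_of_disjoint hdisj2
  rw [hunion, Finset.card_union_of_disjoint hdisj1, hcard] at this
  omega

lemma inducedSize_insert {u : V} {S : Finset V} (hu : u ∉ S) :
    inducedSize G (insert u S) = inducedSize G S + (S.filter (G.Adj u)).card := by
  classical
  have hsplit : G.edgeFinset.filter (· ∈ (insert u S).sym2)
      = (G.edgeFinset.filter (· ∈ S.sym2)) ∪ (S.filter (G.Adj u)).image (fun w => s(u, w)) := by
    ext e
    induction e with
    | _ x y =>
      simp only [Finset.mem_filter, Finset.mem_union, Finset.mem_image,
        Finset.mk_mem_sym2_iff, Finset.mem_insert, SimpleGraph.mem_edgeFinset,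
        SimpleGraph.mem_edgeSet]
      constructor
      · rintro ⟨hadj, hx | hx, hy | hy⟩
        · subst hx hy; exact absurd hadj (G.irrefl)
        · subst hx
          right; exact ⟨y, ⟨hy, hadj⟩, rfl⟩
        · subst hy
          right; exact ⟨x, ⟨hx, hadj.symm⟩, Sym2.eq_swap⟩
        · exact Or.inl ⟨hadj, hx, hy⟩
      · rintro (⟨hadj, hx, hy⟩ | ⟨w, ⟨hw, hadj⟩, he⟩)
        · exact ⟨hadj, Or.inr hx, Or.inr hy⟩
        · rw [Sym2.eq_iff] at he
          rcases he with ⟨hx, hy⟩ | ⟨hx, hy⟩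
          · subst hx hy; exact ⟨hadj, Or.inl rfl, Or.inr hw⟩
          · subst hx hy; exact ⟨hadj.symm, Or.inr hw, Or.inl rfl⟩
  rw [inducedSize, hsplit, Finset.card_union_of_disjoint, inducedSize]
  · congr 1
    apply Finset.card_image_of_injective
    intro w w' hww
    rw [Sym2.eq_iff] at hww
    rcases hww with ⟨_, h2⟩ | ⟨h1, h2⟩
    · exact h2
    · rw [← h1, h2]
  · rw [Finset.disjoint_right]
    rintro e he hmem
    simp only [Finset.mem_image] at he
    obtain ⟨w, hw, rfl⟩ := he
    simp only [Finset.mem_filter, Finset.mk_mem_sym2_iff] at hmem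
    exact hu hmem.2.1

lemma pairTri {c a b : ℕ} (hab : a < b)
    (hval : ∀ S : Finset V, S.card = c → inducedSize G S = a ∨ inducedSize G S = b)
    (hc : 4 ≤ c) {u w : V} {i j : ℕ}
    (hi : i ≤ (PS G u w).card) (hj : j ≤ (PS G w u).card)
    (hij : i + j ≤ c - 1) (hz : c - 1 ≤ i + j + (ZS G u w).card) :
    Tri (b - a) i j := by
  classical
  obtain ⟨Pi, hPiP, hPic⟩ := Finset.exists_subset_card_eq hi
  obtain ⟨Qj, hQjQ, hQjc⟩ := Finset.exists_subset_card_eq hj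
  have hzcard : c - 1 - i - j ≤ (ZS G u w).card := by omega
  obtain ⟨Zl, hZlZ, hZlc⟩ := Finset.exists_subset_card_eq hzcard
  have hPmem : ∀ z ∈ Pi, z ≠ u ∧ z ≠ w ∧ G.Adj u z ∧ ¬ G.Adj w z :=
    fun z hzz => mem_PS.mp (hPiP hzz)
  have hQmem : ∀ z ∈ Qj, z ≠ w ∧ z ≠ u ∧ G.Adj w z ∧ ¬ G.Adj u z :=
    fun z hzz => mem_PS.mp (hQjQ hzz)
  have hZmem : ∀ z ∈ Zl, z ≠ u ∧ z ≠ w ∧ (G.Adj u z ↔ G.Adj w z) :=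
    fun z hzz => mem_ZS.mp (hZlZ hzz)
  have dPQ : Disjoint Pi Qj := by
    rw [Finset.disjoint_left]; intro z h1 h2
    exact (hQmem z h2).2.2.2 (hPmem z h1).2.2.1
  have dPZ : Disjoint Pi Zl := by
    rw [Finset.disjoint_left]; intro z h1 h2
    exact (hPmem z h1).2.2.2 ((hZmem z h2).2.2.mp (hPmem z h1).2.2.1)
  have dQZ : Disjoint Qj Zl := by
    rw [Finset.disjoint_left]; intro z h1 h2
    exact (hQmem z h1).2.2.2 ((hZmem z h2).2.2.mpr (hQmem z h1).2.2.1)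
  set T := Pi ∪ Qj ∪ Zl with hT
  have hTmem : ∀ z ∈ T, z ≠ u ∧ z ≠ w := by
    intro z hzT
    rw [hT, Finset.mem_union, Finset.mem_union] at hzT
    rcases hzT with (h1 | h1) | h1
    · exact ⟨(hPmem z h1).1, (hPmem z h1).2.1⟩
    · exact ⟨(hQmem z h1).2.1, (hQmem z h1).1⟩
    · exact ⟨(hZmem z h1).1, (hZmem z h1).2.1⟩
  have hTcard : T.card = c - 1 := by
    rw [hT, Finset.card_union_of_disjoint, Finset.card_union_of_disjoint dPQ, hPic, hQjc, hZlc]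
    · omega
    · exact Finset.disjoint_union_left.mpr ⟨dPZ, dQZ⟩
  have huT : u ∉ T := fun hmem => (hTmem u hmem).1 rfl
  have hwT : w ∉ T := fun hmem => (hTmem w hmem).2 rfl
  have hcu : (insert u T).card = c := by
    rw [Finset.card_insert_of_notMem huT, hTcard]; omega
  have hcw : (insert w T).card = c := by
    rw [Finset.card_insert_of_notMem hwT, hTcard]; omega
  have eu := inducedSize_insert (G := G) huT
  have ew := inducedSize_insert (G := G) hwT
  have hfu : (T.filter (G.Adj u)).card = i + (Zl.filter (G.Adj u)).card := by
    rw [hT, Finset.filter_union, Finset.filter_union]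
    rw [Finset.filter_true_of_mem (fun z hz => (hPmem z hz).2.2.1),
        Finset.filter_false_of_mem (fun z hz => (hQmem z hz).2.2.2),
        Finset.union_empty]
    rw [Finset.card_union_of_disjoint (dPZ.mono le_rfl (Finset.filter_subset _ _)), hPic]
  have hfw : (T.filter (G.Adj w)).card = j + (Zl.filter (G.Adj u)).card := by
    rw [hT, Finset.filter_union, Finset.filter_union]
    rw [Finset.filter_false_of_mem (fun z hz => (hPmem z hz).2.2.2),
        Finset.filter_true_of_mem (fun z hz => (hQmem z hz).2.2.1),
        Finset.empty_union]
    rw [Finset.card_union_of_disjoint (dQZ.mono le_rfl (Finset.filter_subset _ _)), hQjc]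
    have : Zl.filter (G.Adj w) = Zl.filter (G.Adj u) :=
      Finset.filter_congr (fun z hz => ((hZmem z hz).2.2).symm)
    rw [this]
  have v1 := hval _ hcu
  have v2 := hval _ hcw
  rw [eu, hfu] at v1
  rw [ew, hfw] at v2
  unfold Tri
  omega

lemma starCase (hn : 8 ≤ Fintype.card V)
    (htri : ∀ u w : V, u ≠ w → Twins G u w ∨ Dom G u w ∨ Dom G w u)
    (hdom : ∃ u v : V, u ≠ v ∧ Dom G u v) :
    IsStarGraph G ∨ IsStarGraph Gᶜ := by
  classical
  obtain ⟨u, v, huv, hd⟩ := hdom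
  have dichot : ∀ w : V, w ≠ u → w ≠ v →
      (G.Adj u v ∧ ∀ w', w' ≠ u → w' ≠ v → w' ≠ w → ¬ G.Adj w w') ∨
      (¬ G.Adj u v ∧ ∀ w', w' ≠ u → w' ≠ v → w' ≠ w → G.Adj w w') := by
    intro w hwu hwv
    have hexw' : ∃ w' : V, w' ≠ u ∧ w' ≠ v ∧ w' ≠ w := by
      have h3 : ({u, v, w} : Finset V).card ≤ 3 := by
        refine le_trans (Finset.card_insert_le _ _) (Nat.succ_le_succ ?_)
        refine le_trans (Finset.card_insert_le _ _) (Nat.succ_le_succ ?_)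
        simp
      have hcard : 0 < (univ \ {u, v, w} : Finset V).card := by
        rw [Finset.card_sdiff_of_subset (Finset.subset_univ _), Finset.card_univ]
        omega
      obtain ⟨w', hw'⟩ := Finset.card_pos.mp hcard
      simp only [Finset.mem_sdiff, Finset.mem_insert, Finset.mem_singleton] at hw'
      exact ⟨w', by tauto, by tauto, by tauto⟩
    rcases htri v w hwv.symm with htw | hdvw | hdwv
    · left
      have huadj : G.Adj u v := by
        have h1 := htw u huv hwu.symm
        have h2 : G.Adj w u := ((hd w hwu hwv).1).symm
        exact (h1.mpr h2).symm
      refine ⟨huadj, fun w' h1 h2 h3 => fun hadj => ?_⟩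
      have h4 := htw w' h2 h3
      exact (hd w' h1 h2).2 (h4.mpr hadj)
    · exfalso
      obtain ⟨w', h1, h2, h3⟩ := hexw'
      have h4 : G.Adj v w' := (hdvw w' h2 h3).1
      exact (hd w' h1 h2).2 h4
    · right
      have hnadj : ¬ G.Adj u v := by
        intro hadj
        exact (hdwv u hwu.symm huv).2 hadj.symm
      refine ⟨hnadj, fun w' h1 h2 h3 => ?_⟩
      exact (hdwv w' h3 h2).1
  by_cases hA : G.Adj u v
  · left
    refine ⟨u, fun a b => ?_⟩
    constructor
    · intro hadj
      refine ⟨hadj.ne, ?_⟩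
      by_contra hcon
      push_neg at hcon
      obtain ⟨hau, hbu⟩ := hcon
      by_cases hav : a = v
      · by_cases hbv : b = v
        · exact hadj.ne (hav.trans hbv.symm)
        · exact (hd b hbu hbv).2 (hav ▸ hadj)
      · by_cases hbv : b = v
        · exact (hd a hau hav).2 (hbv ▸ hadj.symm)
        · rcases dichot a hau hav with ⟨_, hno⟩ | ⟨hnA, _⟩
          · exact hno b hbu hbv hadj.ne' hadj
          · exact hnA hA
    · rintro ⟨hab, hcase⟩
      rcases hcase with h | h
      · by_cases hbv : b = v
        · rw [h, hbv]; exact hA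
        · rw [h]; exact (hd b (h ▸ hab.symm) hbv).1
      · by_cases hav : a = v
        · rw [h, hav]; exact hA.symm
        · rw [h]; exact ((hd a (h ▸ hab) hav).1).symm
  · right
    refine ⟨v, fun a b => ?_⟩
    rw [SimpleGraph.compl_adj]
    constructor
    · rintro ⟨hab, hnadj⟩
      refine ⟨hab, ?_⟩
      by_contra hcon
      push_neg at hcon
      obtain ⟨hav, hbv⟩ := hcon
      by_cases hau : a = u
      · exact hnadj (hau ▸ (hd b (hau ▸ hab.symm) hbv).1)
      · by_cases hbu : b = u
        · exact hnadj (hbu ▸ ((hd a hau hav).1).symm)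
        · rcases dichot a hau hav with ⟨hAA, _⟩ | ⟨_, hyes⟩
          · exact hA hAA
          · exact hnadj (hyes b hbu hbv hab.symm)
    · rintro ⟨hab, hcase⟩
      rcases hcase with h | h
      · refine ⟨hab, ?_⟩
        rw [h]
        by_cases hbu : b = u
        · rw [hbu]; exact fun hh => hA hh.symm
        · exact (hd b hbu (h ▸ hab.symm)).2
      · refine ⟨hab, ?_⟩
        rw [h]
        by_cases hau : a = u
        · rw [hau]; exact hA
        · exact fun hh => (hd a hau (h ▸ hab)).2 hh.symm


lemma twinsAll (htw : ∀ u w : V, u ≠ w → Twins G u w) :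
    ∀ (n : ℕ) (S T : Finset V), (S \ T).card = n → S.card = T.card →
      inducedSize G S = inducedSize G T := by
  intro n
  induction n using Nat.strong_induction_on with
  | _ n ih =>
    intro S T hst hcard
    rcases Nat.eq_zero_or_pos n with h0 | hpos
    · have hsub : S ⊆ T := by
        rw [← Finset.sdiff_eq_empty_iff_subset]
        exact Finset.card_eq_zero.mp (hst.trans h0)
      rw [Finset.eq_of_subset_of_card_le hsub hcard.ge]
    · have hTS : 0 < (T \ S).card := by
        rw [← Finset.card_sdiff_comm hcard, hst]; exact hpos
      obtain ⟨v, hv⟩ := Finset.card_pos.mp (by omega : 0 < (S \ T).card)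
      obtain ⟨u, hu⟩ := Finset.card_pos.mp hTS
      rw [Finset.mem_sdiff] at hv hu
      have huv : u ≠ v := fun h => hu.2 (h ▸ hv.1)
      have hvS : v ∈ S := hv.1
      have hv' : v ∉ S.erase v := Finset.notMem_erase _ _
      have hu' : u ∉ S.erase v := fun h => hu.2 (Finset.mem_of_mem_erase h)
      have e1 : inducedSize G S = inducedSize G (insert u (S.erase v)) := by
        conv_lhs => rw [← Finset.insert_erase hvS]
        rw [inducedSize_insert (G := G) hv', inducedSize_insert (G := G) hu']
        congr 2
        apply Finset.filter_congr
        intro z hz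
        have hzv : z ≠ v := Finset.ne_of_mem_erase hz
        have hzu : z ≠ u := fun h => hu.2 (h ▸ Finset.mem_of_mem_erase hz)
        exact (htw v u huv.symm) z hzv hzu
      rw [e1]
      have hcard' : (insert u (S.erase v)).card = T.card := by
        rw [Finset.card_insert_of_notMem hu', Finset.card_erase_of_mem hvS]
        have : 0 < S.card := Finset.card_pos.mpr ⟨v, hvS⟩
        omega
      have hsd : (insert u (S.erase v)) \ T = (S \ T).erase v := by
        ext z
        simp only [Finset.mem_sdiff, Finset.mem_insert, Finset.mem_erase]
        constructor
        · rintro ⟨rfl | hz, hzT⟩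
          · exact absurd hu.1 hzT
          · exact ⟨hz.1, hz.2, hzT⟩
        · rintro ⟨hzv, hzS, hzT⟩
          exact ⟨Or.inr ⟨hzv, hzS⟩, hzT⟩
      have hsdc : ((insert u (S.erase v)) \ T).card = n - 1 := by
        rw [hsd, Finset.card_erase_of_mem (Finset.mem_sdiff.mpr hv), hst]
      exact ih (n - 1) (by omega) _ _ hsdc hcard'

lemma subPS (u w : V) :
    G.neighborFinset u \ insert w (G.neighborFinset w) ⊆ PS G u w := by
  intro z hz
  rw [Finset.mem_sdiff, SimpleGraph.mem_neighborFinset, Finset.mem_insert] at hz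
  push_neg at hz
  obtain ⟨h1, h2, h3⟩ := hz
  rw [SimpleGraph.mem_neighborFinset] at h3
  exact mem_PS.mpr ⟨h1.ne', h2, h1, h3⟩

lemma sdiffPS (u w : V) (hw : ¬ G.Adj u w) :
    G.neighborFinset u \ G.neighborFinset w ⊆ PS G u w := by
  intro z hz
  rw [Finset.mem_sdiff, SimpleGraph.mem_neighborFinset, SimpleGraph.mem_neighborFinset] at hz
  refine mem_PS.mpr ⟨hz.1.ne', ?_, hz.1, hz.2⟩
  intro hzw
  exact hw (hzw ▸ hz.1)

-- no vertex with 3 ≤ deg ≤ n-3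
lemma degM1 (hC : ∀ u w : V, u ≠ w → (PS G u w).card ≤ 1) (hn : 8 ≤ Fintype.card V)
    (v : V) : ¬ (3 ≤ G.degree v ∧ G.degree v ≤ Fintype.card V - 3) := by
  rintro ⟨h3, hle⟩
  set N := G.neighborFinset v with hN
  have hvN : v ∉ N := by
    rw [hN, SimpleGraph.mem_neighborFinset]; exact G.irrefl
  set R := univ \ insert v N with hR
  have hRcard : 1 < R.card := by
    rw [hR, Finset.card_sdiff_of_subset (Finset.subset_univ _), Finset.card_insert_of_notMem hvN,
      Finset.card_univ]
    have : N.card = G.degree v := rfl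
    omega
  obtain ⟨p, hp, q, hq, hpq⟩ := Finset.one_lt_card.mp hRcard
  rw [hR, Finset.mem_sdiff, Finset.mem_insert] at hp hq
  push_neg at hp hq
  have hpv : p ≠ v := hp.2.1
  have hqv : q ≠ v := hq.2.1
  have hpN : p ∉ N := hp.2.2
  have hqN : q ∉ N := hq.2.2
  have hvp : ¬ G.Adj v p := by rwa [← SimpleGraph.mem_neighborFinset]
  have hvq : ¬ G.Adj v q := by rwa [← SimpleGraph.mem_neighborFinset]
  -- intersection bounds
  have hinter : ∀ r : V, r ≠ v → ¬ G.Adj v r →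
      G.degree v ≤ (N ∩ G.neighborFinset r).card + 1 := by
    intro r hrv hvr
    have hsub := sdiffPS v r hvr
    have hcd := hC v r hrv.symm
    have h1 : (N \ G.neighborFinset r).card ≤ 1 :=
      le_trans (Finset.card_le_card hsub) hcd
    have h2 := Finset.card_inter_add_card_sdiff N (G.neighborFinset r)
    have : N.card = G.degree v := rfl
    omega
  have hip := hinter p hpv hvp
  have hiq := hinter q hqv hvq
  set A := N ∩ G.neighborFinset p with hA
  set B := N ∩ G.neighborFinset q with hB
  have hABu : (A ∪ B).card ≤ G.degree v := by
    have : A ∪ B ⊆ N := Finset.union_subset (Finset.inter_subset_left) (Finset.inter_subset_left)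
    exact le_trans (Finset.card_le_card this) le_rfl
  have hABi := Finset.card_inter_add_card_union A B
  have hnonempty : 0 < (A ∩ B).card := by omega
  obtain ⟨x, hx⟩ := Finset.card_pos.mp hnonempty
  rw [Finset.mem_inter, hA, hB, Finset.mem_inter, Finset.mem_inter] at hx
  obtain ⟨⟨hxN, hxp⟩, _, hxq⟩ := hx
  rw [SimpleGraph.mem_neighborFinset] at hxp hxq
  have hxv : G.Adj v x := by rwa [← SimpleGraph.mem_neighborFinset]
  have hsub2 : ({p, q} : Finset V) ⊆ PS G x v := by
    intro z hz
    rw [Finset.mem_insert, Finset.mem_singleton] at hz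
    rcases hz with rfl | rfl
    · exact mem_PS.mpr ⟨fun h => hpN (h ▸ hxN), hpv, hxp.symm, hvp⟩
    · exact mem_PS.mpr ⟨fun h => hqN (h ▸ hxN), hqv, hxq.symm, hvq⟩
  have hcd := hC x v hxv.ne'
  have : ({p, q} : Finset V).card = 2 := Finset.card_pair hpq
  have := Finset.card_le_card hsub2
  omega

lemma degM2 (hC : ∀ u w : V, u ≠ w → (PS G u w).card ≤ 1) (hn : 8 ≤ Fintype.card V)
    (v : V) : G.degree v ≠ 2 := by
  intro h2
  obtain ⟨x, y, hxy, hNv⟩ := Finset.card_eq_two.mp h2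
  have hvx : G.Adj v x := by
    rw [← SimpleGraph.mem_neighborFinset]
    show x ∈ G.neighborFinset v
    rw [show G.neighborFinset v = {x, y} from hNv]
    exact Finset.mem_insert_self _ _
  have hvy : G.Adj v y := by
    rw [← SimpleGraph.mem_neighborFinset]
    show y ∈ G.neighborFinset v
    rw [show G.neighborFinset v = {x, y} from hNv]
    exact Finset.mem_insert_of_mem (Finset.mem_singleton_self _)
  have hcov : ∀ w, w ≠ v → w ≠ x → w ≠ y → (G.Adj x w ∨ G.Adj y w) := by
    intro w hwv hwx hwy
    by_contra hcon
    push_neg at hcon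
    have hsub : ({x, y} : Finset V) ⊆ PS G v w := by
      intro z hz
      rw [Finset.mem_insert, Finset.mem_singleton] at hz
      rcases hz with rfl | rfl
      · exact mem_PS.mpr ⟨hvx.ne', hwx.symm, hvx, fun h => hcon.1 h.symm⟩
      · exact mem_PS.mpr ⟨hvy.ne', hwy.symm, hvy, fun h => hcon.2 h.symm⟩
    have := Finset.card_le_card hsub
    rw [Finset.card_pair hxy] at this
    have := hC v w hwv.symm
    omega
  have hbig : ∀ t, G.Adj v t → G.degree t ≤ 2 := by
    intro t hvt
    by_contra hcon
    push_neg at hcon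
    have hM1 := degM1 hC hn t
    have hdegt : Fintype.card V - 2 ≤ G.degree t := by omega
    have hsub := subPS (G := G) t v
    have hcd := hC t v hvt.ne'
    have hle := le_trans (Finset.card_le_card hsub) hcd
    have h3 := Finset.le_card_sdiff (insert v (G.neighborFinset v)) (G.neighborFinset t)
    have hi : (insert v (G.neighborFinset v)).card ≤ 3 := by
      refine le_trans (Finset.card_insert_le _ _) ?_
      have : (G.neighborFinset v).card = 2 := h2
      omega
    have hdt : (G.neighborFinset t).card = G.degree t := rfl
    omega
  have hWsub : univ \ ({v, x, y} : Finset V) ⊆ G.neighborFinset x ∪ G.neighborFinset y := by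
    intro z hz
    rw [Finset.mem_sdiff] at hz
    simp only [Finset.mem_insert, Finset.mem_singleton] at hz
    push_neg at hz
    obtain ⟨_, hz1, hz2, hz3⟩ := hz
    rcases hcov z hz1 hz2 hz3 with h | h
    · exact Finset.mem_union_left _ (by rw [SimpleGraph.mem_neighborFinset]; exact h)
    · exact Finset.mem_union_right _ (by rw [SimpleGraph.mem_neighborFinset]; exact h)
  have hWcard : (univ \ ({v, x, y} : Finset V)).card = Fintype.card V - ({v, x, y} : Finset V).card := by
    rw [Finset.card_sdiff_of_subset (Finset.subset_univ _), Finset.card_univ]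
  have h3card : ({v, x, y} : Finset V).card ≤ 3 := by
    refine le_trans (Finset.card_insert_le _ _) (Nat.succ_le_succ ?_)
    exact le_trans (Finset.card_insert_le _ _) (by simp)
  have hun : (G.neighborFinset x ∪ G.neighborFinset y).card ≤ 4 := by
    refine le_trans (Finset.card_union_le _ _) ?_
    have h1 := hbig x hvx
    have h2' := hbig y hvy
    have e1 : (G.neighborFinset x).card = G.degree x := rfl
    have e2 : (G.neighborFinset y).card = G.degree y := rfl
    omega
  have := Finset.card_le_card hWsub
  omega

lemma degDichot (hC : ∀ u w : V, u ≠ w → (PS G u w).card ≤ 1) (hn : 8 ≤ Fintype.card V) :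
    (∀ v, G.degree v ≤ 1) ∨ (∀ v, Fintype.card V - 2 ≤ G.degree v) := by
  have hclass : ∀ v, G.degree v ≤ 1 ∨ Fintype.card V - 2 ≤ G.degree v := by
    intro v
    have h1 := degM1 hC hn v
    have h2 := degM2 hC hn v
    omega
  by_cases hall : ∀ v, G.degree v ≤ 1
  · exact Or.inl hall
  · right
    push_neg at hall
    obtain ⟨v0, hv0⟩ := hall
    have hv0big : Fintype.card V - 2 ≤ G.degree v0 := by
      rcases hclass v0 with h | h
      · omega
      · exact h
    intro v
    rcases hclass v with h | h
    · exfalso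
      have hvv0 : v0 ≠ v := by
        intro hh
        rw [hh] at hv0big
        omega
      have hsub := subPS (G := G) v0 v
      have hcd := hC v0 v hvv0
      have hle := le_trans (Finset.card_le_card hsub) hcd
      have h3 := Finset.le_card_sdiff (insert v (G.neighborFinset v)) (G.neighborFinset v0)
      have hi : (insert v (G.neighborFinset v)).card ≤ 2 := by
        refine le_trans (Finset.card_insert_le _ _) ?_
        have : (G.neighborFinset v).card = G.degree v := rfl
        omega
      have hdt : (G.neighborFinset v0).card = G.degree v0 := rfl
      omega
    · exact h

noncomputable def efst (e : Sym2 V) : V := (Quot.out e).1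

lemma efst_mem (e : Sym2 V) : efst e ∈ e := Sym2.out_fst_mem e

lemma edge_unique (hdeg : ∀ v, G.degree v ≤ 1) {e1 e2 : Sym2 V} (h1 : e1 ∈ G.edgeFinset)
    (h2 : e2 ∈ G.edgeFinset) {z : V} (hz1 : z ∈ e1) (hz2 : z ∈ e2) : e1 = e2 := by
  obtain ⟨w1, rfl⟩ := Sym2.mem_iff_exists.mp hz1
  obtain ⟨w2, rfl⟩ := Sym2.mem_iff_exists.mp hz2
  rw [SimpleGraph.mem_edgeFinset, SimpleGraph.mem_edgeSet] at h1 h2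
  have hw1 : w1 ∈ G.neighborFinset z := by rw [SimpleGraph.mem_neighborFinset]; exact h1
  have hw2 : w2 ∈ G.neighborFinset z := by rw [SimpleGraph.mem_neighborFinset]; exact h2
  have := Finset.card_le_one.mp (hdeg z) _ hw1 _ hw2
  rw [this]

lemma matched_count (hdeg : ∀ v, G.degree v ≤ 1) :
    (univ.filter (fun v => G.degree v = 1)).card = 2 * G.edgeFinset.card := by
  rw [← SimpleGraph.sum_degrees_eq_twice_card_edges, Finset.card_filter]
  apply Finset.sum_congr rfl
  intro v _
  have := hdeg v
  interval_cases h : G.degree v <;> simp [h]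

lemma matchingCase {c aa : ℕ} (hc : 4 ≤ c) (hn : c + 4 ≤ Fintype.card V)
    (hdeg : ∀ v, G.degree v ≤ 1)
    (hval : ∀ S : Finset V, S.card = c → inducedSize G S = aa ∨ inducedSize G S = aa + 1)
    (hA : ∃ S : Finset V, S.card = c ∧ inducedSize G S = aa)
    (hB : ∃ S : Finset V, S.card = c ∧ inducedSize G S = aa + 1) :
    IsSingleEdgeGraph G := by
  classical
  set m := G.edgeFinset.card with hm
  have hsum : 2 * m ≤ Fintype.card V := by
    rw [hm, ← matched_count hdeg]
    exact le_trans (Finset.card_le_card (Finset.filter_subset _ _)) (by rw [Finset.card_univ])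
  rcases Nat.lt_or_ge m 2 with hm2 | hm2
  · -- m = 0 or 1
    interval_cases hmv : m
    · -- no edges
      exfalso
      have hempty : G.edgeFinset = ∅ := Finset.card_eq_zero.mp hmv
      obtain ⟨Sa, hSa, hea⟩ := hA
      obtain ⟨Sb, hSb, heb⟩ := hB
      rw [inducedSize, hempty] at hea heb
      simp only [Finset.filter_empty, Finset.card_empty] at hea heb
      omega
    · obtain ⟨e, he⟩ := Finset.card_eq_one.mp hmv
      obtain ⟨⟨x, y⟩, rfl⟩ := Quot.exists_rep e
      have hxyadj : G.Adj x y := by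
        have : Quot.mk _ (x, y) ∈ G.edgeFinset := by rw [he]; exact Finset.mem_singleton_self _
        rwa [SimpleGraph.mem_edgeFinset, SimpleGraph.mem_edgeSet] at this
      refine ⟨x, y, hxyadj.ne, fun p q => ?_⟩
      constructor
      · intro hpq
        have hmem : s(p, q) ∈ G.edgeFinset := by
          rw [SimpleGraph.mem_edgeFinset, SimpleGraph.mem_edgeSet]; exact hpq
        rw [he, Finset.mem_singleton] at hmem
        exact Sym2.eq_iff.mp hmem
      · rintro (⟨rfl, rfl⟩ | ⟨rfl, rfl⟩)
        · exact hxyadj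
        · exact hxyadj.symm
  · exfalso
    -- high construction: a c-set containing t0 = min m (c/2) full edges
    set t0 := min m (c / 2) with ht0
    have ht02 : 2 ≤ t0 := by
      have : 2 ≤ c / 2 := by omega
      omega
    obtain ⟨E0, hE0sub, hE0card⟩ :=
      Finset.exists_subset_card_eq (Nat.min_le_left m (c / 2))
    set B := E0.biUnion (fun e => univ.filter (· ∈ e)) with hB2
    have hBcard : B.card ≤ 2 * t0 := by
      refine le_trans (Finset.card_biUnion_le) ?_
      have hcard2 : ∀ e ∈ E0, (univ.filter (· ∈ e)).card ≤ 2 := by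
        intro e _
        obtain ⟨⟨x, y⟩, rfl⟩ := Quot.exists_rep e
        have hss : univ.filter (· ∈ (Quot.mk _ (x, y) : Sym2 V)) ⊆ {x, y} := by
          intro z hz
          rw [Finset.mem_filter] at hz
          have h2 : z ∈ s(x, y) := hz.2
          rw [Sym2.mem_iff] at h2
          simp only [Finset.mem_insert, Finset.mem_singleton]
          exact h2
        refine le_trans (Finset.card_le_card hss) ?_
        exact le_trans (Finset.card_insert_le _ _) (by simp)
      calc ∑ e ∈ E0, (univ.filter (· ∈ e)).card ≤ ∑ _e ∈ E0, 2 := Finset.sum_le_sum hcard2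
        _ = 2 * t0 := by rw [Finset.sum_const, smul_eq_mul, hE0card, mul_comm]
    have hBc : B.card ≤ c := by
      have : 2 * t0 ≤ 2 * (c / 2) := by
        have := Nat.min_le_right m (c / 2); omega
      omega
    obtain ⟨S, hBS, hSuniv, hScard⟩ :=
      Finset.exists_subsuperset_card_eq (Finset.subset_univ B) hBc
        (by rw [Finset.card_univ]; omega)
    have hhigh : t0 ≤ inducedSize G S := by
      rw [inducedSize, ht0, ← hE0card]
      apply Finset.card_le_card
      intro e he
      rw [Finset.mem_filter]
      refine ⟨hE0sub he, ?_⟩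
      rw [Finset.mem_sym2_iff]
      intro z hz
      apply hBS
      rw [hB2, Finset.mem_biUnion]
      exact ⟨e, he, by rw [Finset.mem_filter]; exact ⟨Finset.mem_univ _, hz⟩⟩
    have hup : t0 ≤ aa + 1 := by
      rcases hval S hScard with h | h <;> omega
    -- low constructions
    rcases le_or_gt (c + m) (Fintype.card V) with hcase | hcase
    · -- independent set of size c exists
      set I := (univ.filter (fun v => G.degree v = 0)) ∪ G.edgeFinset.image efst with hI
      have hiso : (univ.filter (fun v => G.degree v = 0)).card
          = Fintype.card V - 2 * m := by
        have hpart := Finset.card_filter_add_card_filter_not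
          (s := (univ : Finset V)) (p := fun v => G.degree v = 1)
        have heq : univ.filter (fun v => ¬ G.degree v = 1) = univ.filter (fun v => G.degree v = 0) := by
          apply Finset.filter_congr
          intro v _
          have := hdeg v
          constructor
          · intro hh; omega
          · intro hh; omega
        rw [heq] at hpart
        have := matched_count hdeg
        rw [Finset.card_univ] at hpart
        omega
      have himg : (G.edgeFinset.image efst).card = m := by
        rw [Finset.card_image_of_injOn, hm]
        intro e1 h1 e2 h2 hfe
        exact edge_unique hdeg h1 h2 (efst_mem e1) (hfe ▸ efst_mem e2)
      have hdisj : Disjoint (univ.filter (fun v => G.degree v = 0)) (G.edgeFinset.image efst) := by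
        rw [Finset.disjoint_left]
        intro z hz1 hz2
        rw [Finset.mem_filter] at hz1
        rw [Finset.mem_image] at hz2
        obtain ⟨e, he, rfl⟩ := hz2
        obtain ⟨w, hew⟩ := Sym2.mem_iff_exists.mp (efst_mem e)
        rw [hew, SimpleGraph.mem_edgeFinset, SimpleGraph.mem_edgeSet] at he
        have hw : w ∈ G.neighborFinset (efst e) := by
          rw [SimpleGraph.mem_neighborFinset]; exact he
        have hpos := Finset.card_pos.mpr ⟨w, hw⟩
        have hdeg0 : G.degree (efst e) = 0 := hz1.2
        rw [SimpleGraph.degree] at hdeg0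
        omega
      have hIcard : I.card = Fintype.card V - m := by
        rw [hI, Finset.card_union_of_disjoint hdisj, hiso, himg]
        omega
      have hcI : c ≤ I.card := by omega
      obtain ⟨S0, hS0I, hS0card⟩ := Finset.exists_subset_card_eq hcI
      have hnotadj : ∀ x ∈ I, ∀ y ∈ I, ¬ G.Adj x y := by
        intro x hx y hy hadj
        rw [hI, Finset.mem_union] at hx hy
        have hdegpos : ∀ {p q : V}, G.Adj p q → ¬ (G.degree p = 0) := by
          intro p q hpq h0
          have hq : q ∈ G.neighborFinset p := by
            rw [SimpleGraph.mem_neighborFinset]; exact hpq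
          have := Finset.card_pos.mpr ⟨q, hq⟩
          rw [SimpleGraph.degree] at h0
          omega
        rcases hx with hx | hx
        · rw [Finset.mem_filter] at hx; exact hdegpos hadj hx.2
        rcases hy with hy | hy
        · rw [Finset.mem_filter] at hy; exact hdegpos hadj.symm hy.2
        rw [Finset.mem_image] at hx hy
        obtain ⟨e1, he1, hxe⟩ := hx
        obtain ⟨e2, he2, hye⟩ := hy
        have hedge : s(x, y) ∈ G.edgeFinset := by
          rw [SimpleGraph.mem_edgeFinset, SimpleGraph.mem_edgeSet]; exact hadj
        have h1 : s(x, y) = e1 :=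
          edge_unique hdeg hedge he1 (Sym2.mem_mk_left x y) (hxe ▸ efst_mem e1)
        have h2 : s(x, y) = e2 :=
          edge_unique hdeg hedge he2 (Sym2.mem_mk_right x y) (hye ▸ efst_mem e2)
        have hxy : x = y := by rw [← hxe, ← hye, ← h1, ← h2]
        exact hadj.ne hxy
      have hzero : inducedSize G S0 = 0 := by
        rw [inducedSize, Finset.card_eq_zero, Finset.filter_eq_empty_iff]
        intro e he hmem
        obtain ⟨⟨x, y⟩, rfl⟩ := Quot.exists_rep e
        have hadj : G.Adj x y := by
          rwa [SimpleGraph.mem_edgeFinset, SimpleGraph.mem_edgeSet] at he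
        have hmem' : x ∈ S0 ∧ y ∈ S0 := Finset.mk_mem_sym2_iff.mp hmem
        exact hnotadj x (hS0I hmem'.1) y (hS0I hmem'.2) hadj
      have h0 := hval S0 hS0card
      rw [hzero] at h0
      omega
    · -- dense case: remove one endpoint from each of (n - c) edges
      have hn_c : Fintype.card V - c ≤ m := by omega
      obtain ⟨E1, hE1sub, hE1card⟩ := Finset.exists_subset_card_eq hn_c
      set D := E1.image efst with hD
      have hDcard : D.card = Fintype.card V - c := by
        rw [hD, Finset.card_image_of_injOn, hE1card]
        intro e1 h1 e2 h2 hfe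
        exact edge_unique hdeg (hE1sub h1) (hE1sub h2) (efst_mem e1) (hfe ▸ efst_mem e2)
      set Slow := univ \ D with hSlow
      have hSlowcard : Slow.card = c := by
        rw [hSlow, Finset.card_sdiff_of_subset (Finset.subset_univ _), hDcard, Finset.card_univ]
        omega
      have hfilter : G.edgeFinset.filter (· ∈ Slow.sym2) = G.edgeFinset \ E1 := by
        ext e
        simp only [Finset.mem_filter, Finset.mem_sdiff]
        constructor
        · rintro ⟨he, hmem⟩
          refine ⟨he, fun hE1 => ?_⟩
          rw [Finset.mem_sym2_iff] at hmem
          have hfm := hmem (efst e) (efst_mem e)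
          rw [hSlow, Finset.mem_sdiff] at hfm
          exact hfm.2 (by rw [hD]; exact Finset.mem_image_of_mem _ hE1)
        · rintro ⟨he, hne⟩
          refine ⟨he, ?_⟩
          rw [Finset.mem_sym2_iff]
          intro z hz
          rw [hSlow, Finset.mem_sdiff]
          refine ⟨Finset.mem_univ _, fun hzD => ?_⟩
          rw [hD, Finset.mem_image] at hzD
          obtain ⟨e1, he1, hze⟩ := hzD
          have heq : e = e1 := edge_unique hdeg he (hE1sub he1) hz (hze ▸ efst_mem e1)
          exact hne (heq ▸ he1)
      have hlowval : inducedSize G Slow = m - (Fintype.card V - c) := by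
        rw [inducedSize, hfilter, Finset.card_sdiff_of_subset hE1sub, hE1card, ← hm]
      have h0 := hval Slow hSlowcard
      rw [hlowval] at h0
      rcases Nat.le_total m (c / 2) with hmin | hmin
      · rw [ht0, min_eq_left hmin] at hup
        omega
      · rw [ht0, min_eq_right hmin] at hup
        omega

lemma inducedSize_add_compl (S : Finset V) :
    inducedSize G S + inducedSize Gᶜ S = (S.card + 1).choose 2 - S.card := by
  classical
  have hunion : (G.edgeFinset.filter (· ∈ S.sym2)) ∪ (Gᶜ.edgeFinset.filter (· ∈ S.sym2))
      = S.sym2.filter (fun e => ¬ e.IsDiag) := by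
    ext e
    induction e with
    | _ x y =>
      simp only [Finset.mem_union, Finset.mem_filter, SimpleGraph.mem_edgeFinset,
        SimpleGraph.mem_edgeSet, SimpleGraph.compl_adj, Sym2.mk_isDiag_iff]
      constructor
      · rintro (⟨ha, hm⟩ | ⟨⟨hne, _⟩, hm⟩)
        · exact ⟨hm, ha.ne⟩
        · exact ⟨hm, hne⟩
      · rintro ⟨hm, hne⟩
        by_cases ha : G.Adj x y
        · exact Or.inl ⟨ha, hm⟩
        · exact Or.inr ⟨⟨hne, ha⟩, hm⟩
  have hdisj : Disjoint (G.edgeFinset.filter (· ∈ S.sym2)) (Gᶜ.edgeFinset.filter (· ∈ S.sym2)) := by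
    rw [Finset.disjoint_left]
    intro e h1 h2
    rw [Finset.mem_filter, SimpleGraph.mem_edgeFinset] at h1 h2
    induction e with
    | _ x y =>
      rw [SimpleGraph.mem_edgeSet] at h1 h2
      exact (SimpleGraph.compl_adj G x y).mp h2.1 |>.2 h1.1
  have hdiag : S.sym2.filter (fun e => e.IsDiag) = S.image Sym2.diag := by
    ext e
    induction e with
    | _ x y =>
      simp only [Finset.mem_filter, Finset.mem_image, Finset.mk_mem_sym2_iff,
        Sym2.mk_isDiag_iff]
      constructor
      · rintro ⟨⟨hx, _⟩, rfl⟩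
        exact ⟨x, hx, rfl⟩
      · rintro ⟨a, ha, he⟩
        have : (s(a, a) : Sym2 V) = s(x, y) := he
        rw [Sym2.eq_iff] at this
        rcases this with ⟨rfl, rfl⟩ | ⟨rfl, rfl⟩ <;> exact ⟨⟨ha, ha⟩, rfl⟩
  have hc1 : (S.sym2.filter (fun e => e.IsDiag)).card = S.card := by
    rw [hdiag, Finset.card_image_of_injective _ Sym2.diag_injective]
  have hc2 := Finset.card_filter_add_card_filter_not
    (s := S.sym2) (p := fun e => e.IsDiag)
  rw [Finset.card_sym2] at hc2
  have := Finset.card_union_of_disjoint hdisj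
  rw [hunion] at this
  unfold inducedSize
  omega

end Aux


section Main
variable {V : Type*} [Fintype V] [DecidableEq V] {G : SimpleGraph V} [DecidableRel G.Adj]

lemma mainLemma {c a b : ℕ} (hc4 : 4 ≤ c) (hn : c + 4 ≤ Fintype.card V) (hab : a < b)
    (hval : ∀ S : Finset V, S.card = c → inducedSize G S = a ∨ inducedSize G S = b)
    (hA : ∃ S : Finset V, S.card = c ∧ inducedSize G S = a)
    (hB : ∃ S : Finset V, S.card = c ∧ inducedSize G S = b) :
    IsStarGraph G ∨ IsSingleEdgeGraph G ∨ IsStarGraph Gᶜ ∨ IsSingleEdgeGraph Gᶜ := by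
  classical
  have hn8 : 8 ≤ Fintype.card V := by omega
  have tri : ∀ u w : V, u ≠ w → ∀ i j : ℕ,
      i ≤ (PS G u w).card → j ≤ (PS G w u).card → i + j ≤ c - 1 →
      c - 1 ≤ i + j + (ZS G u w).card → Tri (b - a) i j :=
    fun u w _ i j hi hj hij hz => pairTri hab hval hc4 hi hj hij hz
  have htot : ∀ u w : V, u ≠ w →
      (c - 1) + 3 ≤ (PS G u w).card + (PS G w u).card + (ZS G u w).card := by
    intro u w huw
    have := PQZ_card (G := G) huw
    omega
  by_cases hd1 : b = a + 1
  · -- d = 1 : matching case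
    have hC : ∀ u w : V, u ≠ w → (PS G u w).card ≤ 1 := by
      intro u w huw
      exact (arith1 (by omega : 3 ≤ c - 1) (by omega : b - a = 1) (htot u w huw)
        (tri u w huw)).1
    have hval' : ∀ S : Finset V, S.card = c →
        inducedSize G S = a ∨ inducedSize G S = a + 1 := by
      intro S hS
      rcases hval S hS with h | h
      · exact Or.inl h
      · exact Or.inr (by omega)
    rcases degDichot hC hn8 with hmatch | hco
    · refine Or.inr (Or.inl ?_)
      exact matchingCase hc4 hn hmatch hval' hA ⟨(hB.choose), hB.choose_spec.1, by
        have := hB.choose_spec.2; omega⟩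
    · refine Or.inr (Or.inr (Or.inr ?_))
      -- complement is a matching
      set K := (c + 1).choose 2 - c with hK
      have hsumc : ∀ S : Finset V, S.card = c →
          inducedSize G S + inducedSize Gᶜ S = K := by
        intro S hS
        rw [hK, ← hS]
        exact inducedSize_add_compl S
      have hbK : b ≤ K := by
        obtain ⟨Sb, hSb, heb⟩ := hB
        have := hsumc Sb hSb
        omega
      have hdegc : ∀ v, Gᶜ.degree v ≤ 1 := by
        intro v
        rw [SimpleGraph.degree_compl]
        have := hco v
        omega
      have hvalc : ∀ S : Finset V, S.card = c →
          inducedSize Gᶜ S = K - b ∨ inducedSize Gᶜ S = (K - b) + 1 := by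
        intro S hS
        have h1 := hsumc S hS
        rcases hval S hS with h | h <;> omega
      have hAc : ∃ S : Finset V, S.card = c ∧ inducedSize Gᶜ S = K - b := by
        obtain ⟨Sb, hSb, heb⟩ := hB
        exact ⟨Sb, hSb, by have := hsumc Sb hSb; omega⟩
      have hBc : ∃ S : Finset V, S.card = c ∧ inducedSize Gᶜ S = (K - b) + 1 := by
        obtain ⟨Sa, hSa, hea⟩ := hA
        exact ⟨Sa, hSa, by have := hsumc Sa hSa; omega⟩
      exact matchingCase hc4 hn hdegc hvalc hAc hBc
  · -- d ≥ 2 : star case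
    have hd2 : 2 ≤ b - a := by omega
    have htri : ∀ u w : V, u ≠ w → Twins G u w ∨ Dom G u w ∨ Dom G w u := by
      intro u w huw
      have harith := arith2 (by omega : 3 ≤ c - 1) hd2 (htot u w huw) (tri u w huw)
      have hP : ∀ z : V, (PS G u w).card = 0 → ¬(z ≠ u ∧ z ≠ w ∧ G.Adj u z ∧ ¬ G.Adj w z) := by
        intro z h0 hmem
        have : z ∈ PS G u w := mem_PS.mpr hmem
        rw [Finset.card_eq_zero.mp h0] at this
        exact absurd this (Finset.notMem_empty z)
      have hQ : ∀ z : V, (PS G w u).card = 0 → ¬(z ≠ w ∧ z ≠ u ∧ G.Adj w z ∧ ¬ G.Adj u z) := by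
        intro z h0 hmem
        have : z ∈ PS G w u := mem_PS.mpr hmem
        rw [Finset.card_eq_zero.mp h0] at this
        exact absurd this (Finset.notMem_empty z)
      have hZ : ∀ z : V, (ZS G u w).card = 0 → ¬(z ≠ u ∧ z ≠ w ∧ (G.Adj u z ↔ G.Adj w z)) := by
        intro z h0 hmem
        have : z ∈ ZS G u w := mem_ZS.mpr hmem
        rw [Finset.card_eq_zero.mp h0] at this
        exact absurd this (Finset.notMem_empty z)
      rcases harith with ⟨h1, h2⟩ | ⟨h1, h2⟩ | ⟨h1, h2⟩
      · left
        intro z hzu hzw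
        have hp := hP z h1
        have hq := hQ z h2
        push_neg at hp hq
        constructor
        · intro hu
          by_contra hw
          exact hw (hp hzu hzw hu)
        · intro hw
          by_contra hu
          exact hu (hq hzw hzu hw)
      · right; left
        intro z hzu hzw
        have hq := hQ z h1
        have hz := hZ z h2
        push_neg at hq
        have hziff : ¬ (G.Adj u z ↔ G.Adj w z) := by
          intro hiff
          exact hz ⟨hzu, hzw, hiff⟩
        by_cases hu : G.Adj u z
        · refine ⟨hu, fun hw => hziff ⟨fun _ => hw, fun _ => hu⟩⟩
        · exfalso
          by_cases hw : G.Adj w z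
          · exact hu (hq hzw hzu hw)
          · exact hziff ⟨fun h => absurd h hu, fun h => absurd h hw⟩
      · right; right
        intro z hzw hzu
        have hp := hP z h1
        have hz := hZ z h2
        push_neg at hp
        have hziff : ¬ (G.Adj u z ↔ G.Adj w z) := by
          intro hiff
          exact hz ⟨hzu, hzw, hiff⟩
        by_cases hw : G.Adj w z
        · refine ⟨hw, fun hu => hziff ⟨fun _ => hw, fun _ => hu⟩⟩
        · exfalso
          by_cases hu : G.Adj u z
          · exact hw (hp hzu hzw hu)
          · exact hziff ⟨fun h => absurd h hu, fun h => absurd h hw⟩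
    by_cases hdomex : ∃ u v : V, u ≠ v ∧ Dom G u v
    · rcases starCase hn8 htri hdomex with h | h
      · exact Or.inl h
      · exact Or.inr (Or.inr (Or.inl h))
    · exfalso
      push_neg at hdomex
      have htw : ∀ u w : V, u ≠ w → Twins G u w := by
        intro u w huw
        rcases htri u w huw with h | h | h
        · exact h
        · exact absurd h (hdomex u w huw)
        · exact absurd h (hdomex w u huw.symm)
      obtain ⟨Sa, hSa, hea⟩ := hA
      obtain ⟨Sb, hSb, heb⟩ := hB
      have := twinsAll htw ((Sa \ Sb).card) Sa Sb rfl (by rw [hSa, hSb])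
      omega

end Main

/-- If `4 ≤ c ≤ n - 4` and the induced subgraphs of `G` of order `c` take exactly two
sizes, then `G` or its complement is a star or a single edge plus isolated vertices. -/
theorem stmt_16 {V : Type*} [Fintype V] [DecidableEq V] (G : SimpleGraph V)
    [DecidableRel G.Adj] (c : ℕ) (hc4 : 4 ≤ c) (hcn : c ≤ Fintype.card V - 4)
    (h : {k : ℕ | ∃ S : Finset V, S.card = c ∧ inducedSize G S = k}.ncard = 2) :
    IsStarGraph G ∨ IsSingleEdgeGraph G ∨ IsStarGraph Gᶜ ∨ IsSingleEdgeGraph Gᶜ := by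
  classical
  have hn : c + 4 ≤ Fintype.card V := by omega
  obtain ⟨x, y, hxy, hset⟩ := Set.ncard_eq_two.mp h
  have hmemx : ∃ S : Finset V, S.card = c ∧ inducedSize G S = x := by
    have : x ∈ {k : ℕ | ∃ S : Finset V, S.card = c ∧ inducedSize G S = k} := by
      rw [hset]; exact Set.mem_insert _ _
    exact this
  have hmemy : ∃ S : Finset V, S.card = c ∧ inducedSize G S = y := by
    have : y ∈ {k : ℕ | ∃ S : Finset V, S.card = c ∧ inducedSize G S = k} := by
      rw [hset]; exact Set.mem_insert_iff.mpr (Or.inr rfl)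
    exact this
  have hval : ∀ S : Finset V, S.card = c → inducedSize G S = x ∨ inducedSize G S = y := by
    intro S hS
    have : inducedSize G S ∈ {k : ℕ | ∃ S : Finset V, S.card = c ∧ inducedSize G S = k} :=
      ⟨S, hS, rfl⟩
    rw [hset] at this
    rcases this with h' | h'
    · exact Or.inl h'
    · exact Or.inr h'
  rcases lt_or_gt_of_ne hxy with hlt | hlt
  · exact mainLemma hc4 hn hlt hval hmemx hmemy
  · exact mainLemma hc4 hn hlt (fun S hS => (hval S hS).symm) hmemy hmemx
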